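/- The function v(x) = x²/2 on [-1,1] does not belong to the domain of the subdifferential of the total variation functional J. That is, there is no w ∈ L²(-1,1) such that for all h ∈ L²(-1,1) with v + h of bounded variation satisfying the same boundary values, J(v+h) - J(v) ≥ ∫_{-1}^{1} w·h dx, where J(u) = total variation of u on [-1,1] (with J = +∞ off BV). -/

import Mathlib

open MeasureTheory Set

lemma evar_mono {f : ℝ → ℝ} {a b : ℝ} (hab : a ≤ b) (hf : MonotoneOn f (Icc a b)) :
    eVariationOn f (Icc a b) = ENNReal.ofReal (f b - f a) := by
  have ha : a ∈ Icc a b := ⟨le_rfl, hab⟩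
  have hb : b ∈ Icc a b := ⟨hab, le_rfl⟩
  apply le_antisymm
  · have := hf.eVariationOn_le ha hb
    rwa [Set.inter_self] at this
  · have h2 := eVariationOn.edist_le f ha hb
    rwa [edist_dist, Real.dist_eq, abs_sub_comm, abs_of_nonneg (sub_nonneg.2 (hf ha hb hab))] at h2

lemma evar_anti {f : ℝ → ℝ} {a b : ℝ} (hab : a ≤ b) (hf : AntitoneOn f (Icc a b)) :
    eVariationOn f (Icc a b) = ENNReal.ofReal (f a - f b) := by
  have himg : (fun x : ℝ => -x) '' Icc (-b) (-a) = Icc a b := by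
    ext z
    simp only [Set.mem_image, Set.mem_Icc]
    constructor
    · rintro ⟨u, ⟨h1, h2⟩, rfl⟩; exact ⟨by linarith, by linarith⟩
    · rintro ⟨h1, h2⟩; exact ⟨-z, ⟨by linarith, by linarith⟩, by ring⟩
  have h := eVariationOn.comp_eq_of_antitoneOn f (fun x : ℝ => -x)
    (fun x _ y _ hxy => neg_le_neg hxy) (t := Icc (-b) (-a))
  rw [himg] at h
  rw [← h, evar_mono (by linarith) (fun x hx y hy hxy => by
    obtain ⟨hx1, hx2⟩ := hx; obtain ⟨hy1, hy2⟩ := hy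
    have h1 : -y ∈ Icc a b := ⟨by linarith, by linarith⟩
    have h2 : -x ∈ Icc a b := ⟨by linarith, by linarith⟩
    exact hf h1 h2 (neg_le_neg hxy))]
  simp [Function.comp]

lemma evar_split (f : ℝ → ℝ) {a b c : ℝ} (hab : a ≤ b) (hbc : b ≤ c) :
    eVariationOn f (Icc a c) = eVariationOn f (Icc a b) + eVariationOn f (Icc b c) := by
  have h := eVariationOn.Icc_add_Icc f (s := Icc a c) hab hbc ⟨hab, hbc⟩
  rw [Set.inter_eq_self_of_subset_right (Icc_subset_Icc le_rfl hbc),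
    Set.inter_eq_self_of_subset_right (Icc_subset_Icc hab le_rfl),
    Set.inter_self] at h
  exact h.symm

lemma evar_v : eVariationOn (fun x : ℝ => x ^ 2 / 2) (Icc (-1 : ℝ) 1) = ENNReal.ofReal 1 := by
  rw [evar_split _ (by norm_num : (-1:ℝ) ≤ 0) (by norm_num : (0:ℝ) ≤ 1)]
  rw [evar_anti (by norm_num) (fun x hx y hy hxy =>
    by nlinarith [hx.1, hx.2, hy.1, hy.2]),
    evar_mono (by norm_num) (fun x hx y hy hxy =>
    by nlinarith [hx.1, hx.2, hy.1, hy.2])]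
  norm_num
  rw [← ENNReal.ofReal_add (by norm_num) (by norm_num)]
  norm_num

set_option maxHeartbeats 1000000 in
lemma evar_g (δ : ℝ) (h0 : 0 < δ) (h1 : δ < 1) :
    eVariationOn (fun x : ℝ => x ^ 2 / 2 + δ ^ 2 / 2 * max 0 (1 - |x| / δ)) (Icc (-1 : ℝ) 1)
      = ENNReal.ofReal (1 - δ ^ 2 / 2) := by
  set g : ℝ → ℝ := fun x : ℝ => x ^ 2 / 2 + δ ^ 2 / 2 * max 0 (1 - |x| / δ) with hg
  have e0 : ∀ z : ℝ, δ ≤ |z| → max 0 (1 - |z| / δ) = 0 := by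
    intro z hz
    apply max_eq_left
    rw [sub_nonpos, le_div_iff₀ h0, one_mul]
    exact hz
  have eneg : ∀ z : ℝ, -δ ≤ z → z ≤ 0 → max 0 (1 - |z| / δ) = 1 + z / δ := by
    intro z hz1 hz2
    rw [abs_of_nonpos hz2, show (1 : ℝ) - -z / δ = 1 + z / δ by ring]
    apply max_eq_right
    have : (-1 : ℝ) ≤ z / δ := by
      rw [neg_le, ← neg_div, div_le_one h0]; linarith
    linarith
  have epos : ∀ z : ℝ, 0 ≤ z → z ≤ δ → max 0 (1 - |z| / δ) = 1 - z / δ := by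
    intro z hz1 hz2
    rw [abs_of_nonneg hz1]
    apply max_eq_right
    have : z / δ ≤ 1 := by rw [div_le_one h0]; linarith
    linarith
  have hq : ∀ z : ℝ, δ ^ 2 / 2 * (1 + z / δ) = δ ^ 2 / 2 + δ * z / 2 := by
    intro z; field_simp
  have hq' : ∀ z : ℝ, δ ^ 2 / 2 * (1 - z / δ) = δ ^ 2 / 2 - δ * z / 2 := by
    intro z; field_simp
  -- endpoint values
  have gm1 : g (-1) = 1 / 2 := by
    rw [hg]; simp only []
    rw [e0 (-1) (by rw [abs_neg, abs_one]; linarith)]; norm_num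
  have gmd : g (-δ) = δ ^ 2 / 2 := by
    rw [hg]; simp only []
    rw [e0 (-δ) (by rw [abs_neg, abs_of_pos h0])]; ring
  have gmd2 : g (-(δ/2)) = 3 * δ ^ 2 / 8 := by
    rw [hg]; simp only []
    rw [eneg (-(δ/2)) (by linarith) (by linarith), hq]; field_simp; ring
  have g0 : g 0 = δ ^ 2 / 2 := by
    rw [hg]; simp only []
    rw [epos 0 le_rfl (le_of_lt h0)]; norm_num
  have gd2 : g (δ/2) = 3 * δ ^ 2 / 8 := by
    rw [hg]; simp only []
    rw [epos (δ/2) (by linarith) (by linarith), hq']; field_simp; ring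
  have gd : g δ = δ ^ 2 / 2 := by
    rw [hg]; simp only []
    rw [e0 δ (by rw [abs_of_pos h0])]; ring
  have g1 : g 1 = 1 / 2 := by
    rw [hg]; simp only []
    rw [e0 1 (by rw [abs_one]; linarith)]; norm_num
  -- monotonicity of pieces
  have V1 : eVariationOn g (Icc (-1) (-δ)) = ENNReal.ofReal (1 / 2 - δ ^ 2 / 2) := by
    rw [evar_anti (by linarith) (fun x hx y hy hxy => by
      obtain ⟨hx1, hx2⟩ := hx; obtain ⟨hy1, hy2⟩ := hy
      show y ^ 2 / 2 + δ ^ 2 / 2 * max 0 (1 - |y| / δ) ≤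
        x ^ 2 / 2 + δ ^ 2 / 2 * max 0 (1 - |x| / δ)
      rw [e0 x (by rw [abs_of_nonpos (by linarith)]; linarith),
        e0 y (by rw [abs_of_nonpos (by linarith)]; linarith)]
      nlinarith), gm1, gmd]
  have V2 : eVariationOn g (Icc (-δ) (-(δ/2))) = ENNReal.ofReal (δ ^ 2 / 8) := by
    rw [evar_anti (by linarith) (fun x hx y hy hxy => by
      obtain ⟨hx1, hx2⟩ := hx; obtain ⟨hy1, hy2⟩ := hy
      show y ^ 2 / 2 + δ ^ 2 / 2 * max 0 (1 - |y| / δ) ≤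
        x ^ 2 / 2 + δ ^ 2 / 2 * max 0 (1 - |x| / δ)
      rw [eneg x (by linarith) (by linarith), eneg y (by linarith) (by linarith), hq, hq]
      nlinarith [mul_nonpos_of_nonneg_of_nonpos (sub_nonneg.2 hxy)
        (show x + y + δ ≤ 0 by linarith)]), gmd, gmd2]
    congr 1; ring
  have V3 : eVariationOn g (Icc (-(δ/2)) 0) = ENNReal.ofReal (δ ^ 2 / 8) := by
    rw [evar_mono (by linarith) (fun x hx y hy hxy => by
      obtain ⟨hx1, hx2⟩ := hx; obtain ⟨hy1, hy2⟩ := hy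
      show x ^ 2 / 2 + δ ^ 2 / 2 * max 0 (1 - |x| / δ) ≤
        y ^ 2 / 2 + δ ^ 2 / 2 * max 0 (1 - |y| / δ)
      rw [eneg x (by linarith) (by linarith), eneg y (by linarith) (by linarith), hq, hq]
      nlinarith [mul_nonneg (sub_nonneg.2 hxy)
        (show 0 ≤ x + y + δ by linarith)]), g0, gmd2]
    congr 1; ring
  have V4 : eVariationOn g (Icc 0 (δ/2)) = ENNReal.ofReal (δ ^ 2 / 8) := by
    rw [evar_anti (by linarith) (fun x hx y hy hxy => by
      obtain ⟨hx1, hx2⟩ := hx; obtain ⟨hy1, hy2⟩ := hy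
      show y ^ 2 / 2 + δ ^ 2 / 2 * max 0 (1 - |y| / δ) ≤
        x ^ 2 / 2 + δ ^ 2 / 2 * max 0 (1 - |x| / δ)
      rw [epos x (by linarith) (by linarith), epos y (by linarith) (by linarith), hq', hq']
      nlinarith [mul_nonneg (sub_nonneg.2 hxy)
        (show 0 ≤ δ - x - y by linarith)]), g0, gd2]
    congr 1; ring
  have V5 : eVariationOn g (Icc (δ/2) δ) = ENNReal.ofReal (δ ^ 2 / 8) := by
    rw [evar_mono (by linarith) (fun x hx y hy hxy => by
      obtain ⟨hx1, hx2⟩ := hx; obtain ⟨hy1, hy2⟩ := hy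
      show x ^ 2 / 2 + δ ^ 2 / 2 * max 0 (1 - |x| / δ) ≤
        y ^ 2 / 2 + δ ^ 2 / 2 * max 0 (1 - |y| / δ)
      rw [epos x (by linarith) (by linarith), epos y (by linarith) (by linarith), hq', hq']
      nlinarith [mul_nonneg (sub_nonneg.2 hxy)
        (show 0 ≤ x + y - δ by linarith)]), gd, gd2]
    congr 1; ring
  have V6 : eVariationOn g (Icc δ 1) = ENNReal.ofReal (1 / 2 - δ ^ 2 / 2) := by
    rw [evar_mono (by linarith) (fun x hx y hy hxy => by
      obtain ⟨hx1, hx2⟩ := hx; obtain ⟨hy1, hy2⟩ := hy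
      show x ^ 2 / 2 + δ ^ 2 / 2 * max 0 (1 - |x| / δ) ≤
        y ^ 2 / 2 + δ ^ 2 / 2 * max 0 (1 - |y| / δ)
      rw [e0 x (by rw [abs_of_nonneg (by linarith)]; linarith),
        e0 y (by rw [abs_of_nonneg (by linarith)]; linarith)]
      nlinarith), g1, gd]
  have hd2 : (0:ℝ) ≤ δ ^ 2 := sq_nonneg δ
  have hd1 : δ ^ 2 ≤ 1 := by nlinarith
  rw [evar_split g (show (-1:ℝ) ≤ -δ by linarith) (show -δ ≤ (1:ℝ) by linarith),
    evar_split g (show -δ ≤ -(δ/2) by linarith) (show -(δ/2) ≤ (1:ℝ) by linarith),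
    evar_split g (show -(δ/2) ≤ (0:ℝ) by linarith) (show (0:ℝ) ≤ 1 by linarith),
    evar_split g (show (0:ℝ) ≤ δ/2 by linarith) (show δ/2 ≤ (1:ℝ) by linarith),
    evar_split g (show δ/2 ≤ δ by linarith) (show δ ≤ (1:ℝ) by linarith),
    V1, V2, V3, V4, V5, V6,
    ← ENNReal.ofReal_add (by linarith) (by linarith),
    ← ENNReal.ofReal_add (by linarith) (by linarith),
    ← ENNReal.ofReal_add (by linarith) (by linarith),
    ← ENNReal.ofReal_add (by linarith) (by linarith),
    ← ENNReal.ofReal_add (by linarith) (by linarith)]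
  congr 1; ring

set_option maxHeartbeats 1000000 in
theorem x_sq_over_two_not_in_domain_of_subdifferential :
    ¬ ∃ w : ℝ → ℝ, MemLp w 2 (volume.restrict (Ioo (-1 : ℝ) 1)) ∧
      ∀ h : ℝ → ℝ, MemLp h 2 (volume.restrict (Ioo (-1 : ℝ) 1)) →
        BoundedVariationOn (fun x => x ^ 2 / 2 + h x) (Icc (-1 : ℝ) 1) →
        h (-1) = 0 → h 1 = 0 →
        (eVariationOn (fun x => x ^ 2 / 2 + h x) (Icc (-1 : ℝ) 1)).toReal
            - (eVariationOn (fun x : ℝ => x ^ 2 / 2) (Icc (-1 : ℝ) 1)).toReal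
          ≥ ∫ x in Ioo (-1 : ℝ) 1, w x * h x := by
  rintro ⟨w, hw, hsub⟩
  haveI : Fact (volume (Ioo (-1 : ℝ) 1) < ⊤) := ⟨by rw [Real.volume_Ioo]; exact ENNReal.ofReal_lt_top⟩
  have hwi : Integrable w (volume.restrict (Ioo (-1 : ℝ) 1)) :=
    hw.integrable (by norm_num)
  set μ := volume.restrict (Ioo (-1 : ℝ) 1) with hμ
  set F : ℕ → ℝ := fun n =>
    ∫ x, (Ioo (-(1/(n+1) : ℝ)) (1/(n+1))).indicator (fun x => |w x|) x ∂μ with hF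
  have hFlim : Filter.Tendsto F Filter.atTop (nhds 0) := by
    have h0' : (0 : ℝ) = ∫ x, (0 : ℝ) ∂μ := by simp
    rw [h0']
    apply tendsto_integral_of_dominated_convergence (fun x => |w x|)
    · intro n
      exact (hwi.1.norm.congr (by filter_upwards with x using (Real.norm_eq_abs _).symm)).indicator
        measurableSet_Ioo
    · exact hwi.abs
    · intro n
      filter_upwards with x
      by_cases hx : x ∈ Ioo (-(1/(n+1) : ℝ)) (1/(n+1))
      · rw [Set.indicator_of_mem hx, Real.norm_eq_abs, abs_abs]
      · rw [Set.indicator_of_notMem hx]; simp [abs_nonneg]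
    · have hne : ∀ᵐ (a : ℝ) ∂μ, a ≠ 0 := by
        rw [ae_iff]
        have : {a : ℝ | ¬ a ≠ 0} = {0} := by ext a; simp
        rw [this]
        exact le_antisymm (le_trans (Measure.restrict_le_self _) (by simp)) (zero_le)
      filter_upwards [hne] with a ha
      obtain ⟨N, hN⟩ := exists_nat_gt (1 / |a|)
      apply Filter.Tendsto.congr' _ tendsto_const_nhds
      rw [Filter.EventuallyEq, Filter.eventually_atTop]
      refine ⟨N, fun n hn => ?_⟩
      have hapos : 0 < |a| := abs_pos.2 ha
      have h1 : (1 : ℝ) / (n + 1) < |a| := by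
        have hcast : (N : ℝ) ≤ (n : ℝ) + 1 := by
          have := (Nat.cast_le (α := ℝ)).2 hn; linarith
        have h2 : 1 / |a| < (n : ℝ) + 1 := lt_of_lt_of_le hN hcast
        rw [div_lt_iff₀ hapos] at h2
        rw [div_lt_iff₀ (by positivity)]
        linarith [h2, mul_comm ((n : ℝ) + 1) |a|]
      symm
      apply Set.indicator_of_notMem
      rw [Set.mem_Ioo]
      rcases abs_cases a with ⟨he, _⟩ | ⟨he, _⟩
      · rw [he] at h1; intro hc; linarith [hc.2]
      · rw [he] at h1; intro hc; linarith [hc.1]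
  have hev1 : ∀ᶠ n in Filter.atTop, F n < 1 :=
    Filter.Tendsto.eventually_lt_const one_pos hFlim
  obtain ⟨n, hFn1, hn1⟩ := (hev1.and (Filter.eventually_ge_atTop 1)).exists
  set δ : ℝ := 1/(n+1) with hδ
  have hδ0 : 0 < δ := by positivity
  have hδ1 : δ < 1 := by
    rw [hδ, div_lt_one (by positivity)]
    have : (1:ℝ) ≤ n := by exact_mod_cast hn1
    linarith
  set h : ℝ → ℝ := fun x => δ^2/2 * max 0 (1 - |x|/δ) with hh
  have hmax1 : ∀ x : ℝ, max 0 (1 - |x|/δ) ≤ 1 := by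
    intro x
    apply max_le (by norm_num)
    have : 0 ≤ |x|/δ := by positivity
    linarith
  have hbnd : ∀ x : ℝ, |h x| ≤ δ^2/2 := by
    intro x
    rw [hh]
    beta_reduce
    rw [abs_mul, abs_of_nonneg (by positivity : (0:ℝ) ≤ δ^2/2), abs_of_nonneg (le_max_left _ _)]
    nlinarith [hmax1 x, le_max_left (0:ℝ) (1 - |x|/δ), sq_nonneg δ]
  have hcont : Continuous h := by
    apply Continuous.mul continuous_const
    exact continuous_const.max (continuous_const.sub (continuous_abs.div_const δ))
  have hmem : MemLp h 2 μ :=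
    MemLp.of_bound hcont.aestronglyMeasurable (δ^2/2)
      (Filter.Eventually.of_forall (fun x => by rw [Real.norm_eq_abs]; exact hbnd x))
  have hvar : eVariationOn (fun x => x ^ 2 / 2 + h x) (Icc (-1:ℝ) 1)
      = ENNReal.ofReal (1 - δ^2/2) := evar_g δ hδ0 hδ1
  have hBV : BoundedVariationOn (fun x => x ^ 2 / 2 + h x) (Icc (-1:ℝ) 1) := by
    rw [BoundedVariationOn, hvar]; exact ENNReal.ofReal_ne_top
  have e0' : ∀ z : ℝ, δ ≤ |z| → max 0 (1 - |z| / δ) = 0 := by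
    intro z hz; apply max_eq_left; rw [sub_nonpos, le_div_iff₀ hδ0, one_mul]; exact hz
  have hbm1 : h (-1) = 0 := by
    rw [hh]; beta_reduce; rw [e0' (-1) (by rw [abs_neg, abs_one]; linarith), mul_zero]
  have hbp1 : h 1 = 0 := by
    rw [hh]; beta_reduce; rw [e0' 1 (by rw [abs_one]; linarith), mul_zero]
  have hineq := hsub h hmem hBV hbm1 hbp1
  rw [hvar, evar_v, ENNReal.toReal_ofReal (by nlinarith),
    ENNReal.toReal_ofReal (by norm_num)] at hineq
  have hpoint : ∀ x : ℝ, |w x * h x| ≤ δ^2/2 * (Ioo (-δ) δ).indicator (fun x => |w x|) x := by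
    intro x
    by_cases hx : x ∈ Ioo (-δ) δ
    · rw [Set.indicator_of_mem hx, abs_mul]
      have := hbnd x
      nlinarith [abs_nonneg (w x), abs_nonneg (h x)]
    · have hax : δ ≤ |x| := by
        by_contra hc
        push_neg at hc
        exact hx ⟨(abs_lt.1 hc).1, (abs_lt.1 hc).2⟩
      have hz : h x = 0 := by rw [hh]; beta_reduce; rw [e0' x hax, mul_zero]
      rw [Set.indicator_of_notMem hx, hz, mul_zero, abs_zero, mul_zero]
  have hintind : Integrable (fun x => δ^2/2 * (Ioo (-δ) δ).indicator (fun x => |w x|) x) μ :=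
    (hwi.abs.indicator measurableSet_Ioo).const_mul _
  have habs : |∫ x, w x * h x ∂μ| ≤ δ^2/2 * F n := by
    have s1 : |∫ x, w x * h x ∂μ| ≤ ∫ x, |w x * h x| ∂μ := by
      simpa only [Real.norm_eq_abs] using norm_integral_le_integral_norm (μ := μ) (fun x => w x * h x)
    have s2 : ∫ x, |w x * h x| ∂μ ≤ ∫ x, δ^2/2 * (Ioo (-δ) δ).indicator (fun x => |w x|) x ∂μ :=
      integral_mono_of_nonneg (Filter.Eventually.of_forall fun x => abs_nonneg _) hintind
        (Filter.Eventually.of_forall hpoint)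
    have s3 : ∫ x, δ^2/2 * (Ioo (-δ) δ).indicator (fun x => |w x|) x ∂μ = δ^2/2 * F n := by
      rw [integral_const_mul]
    linarith
  have hlow : -(δ^2/2 * F n) ≤ ∫ x, w x * h x ∂μ := by
    have := neg_abs_le (∫ x, w x * h x ∂μ)
    linarith
  have hδ2 : (0:ℝ) < δ^2/2 := by positivity
  nlinarith [mul_lt_mul_of_pos_left hFn1 hδ2]
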